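/- arXiv:1611.00843 — 2 statements merged into one kernel-verified Lean document; each statement's English description precedes it below -/
import Mathlib

section
/- Let $S$ be a discrete countable space, $T$ a metric space, $Q, Q_1, Q_2, \dots$ probability measures on $S$ with $(Q_n)$ tight, and $K$ a probability kernel from $S$ to $T$ that is injective when viewed as a map from probability measures on $S$ to probability measures on $T$ (via $Q \mapsto QK$). If $Q_n K \to Q K$ weakly as $n \to \infty$, then $Q_n \to Q$ weakly as $n \to \infty$. -/
open MeasureTheory Filter Topology BoundedContinuousFunction
open scoped ENNReal NNReal

section ScheffeAux

lemma scheffe_tendsto_tsum {S : Type*} [Countable S] {u : ℕ → S → ℝ} {p : S → ℝ}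
    (hu0 : ∀ n x, 0 ≤ u n x) (hp0 : ∀ x, 0 ≤ p x)
    (hu1 : ∀ n, HasSum (u n) 1) (hp1 : HasSum p 1)
    (hpt : ∀ x, Tendsto (fun n => u n x) atTop (𝓝 (p x)))
    (c : S → ℝ) (M : ℝ) (hc : ∀ x, |c x| ≤ M) :
    Tendsto (fun n => ∑' x, u n x * c x) atTop (𝓝 (∑' x, p x * c x)) := by
  have hps : Summable p := hp1.summable
  have hus : ∀ n, Summable (u n) := fun n => (hu1 n).summable
  have hM : 0 ≤ M := by
    have : Nonempty S := by
      by_contra h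
      rw [not_nonempty_iff] at h
      have := hp1.tsum_eq
      rw [tsum_empty] at this
      norm_num at this
    obtain ⟨x⟩ := this
    exact (abs_nonneg (c x)).trans (hc x)
  set d : ℕ → S → ℝ := fun n x => max (p x - u n x) 0 with hd
  have hd0 : ∀ n x, 0 ≤ d n x := fun n x => le_max_right _ _
  have hdle : ∀ n x, d n x ≤ p x := fun n x =>
    max_le (by linarith [hu0 n x]) (hp0 x)
  have hds : ∀ n, Summable (d n) := fun n => hps.of_nonneg_of_le (hd0 n) (hdle n)
  have hdt : Tendsto (fun n => ∑' x, d n x) atTop (𝓝 0) := by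
    have h0 : Tendsto (fun n => ∑' x, d n x) atTop (𝓝 (∑' _ : S, (0:ℝ))) := by
      apply tendsto_tsum_of_dominated_convergence hps
      · intro x
        have h1 : Tendsto (fun n => p x - u n x) atTop (𝓝 (p x - p x)) :=
          tendsto_const_nhds.sub (hpt x)
        rw [sub_self] at h1
        simpa using h1.max (tendsto_const_nhds (x := (0:ℝ)))
      · exact Eventually.of_forall fun n x => by
          rw [Real.norm_of_nonneg (hd0 n x)]; exact hdle n x
    simpa using h0
  have husc : ∀ n, Summable (fun x => u n x * c x) := fun n =>
    Summable.of_abs (((hus n).mul_right M).of_nonneg_of_le (fun x => abs_nonneg _)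
      (fun x => by rw [abs_mul, abs_of_nonneg (hu0 n x)]
                   exact mul_le_mul_of_nonneg_left (hc x) (hu0 n x)))
  have hpsc : Summable (fun x => p x * c x) :=
    Summable.of_abs ((hps.mul_right M).of_nonneg_of_le (fun x => abs_nonneg _)
      (fun x => by rw [abs_mul, abs_of_nonneg (hp0 x)]
                   exact mul_le_mul_of_nonneg_left (hc x) (hp0 x)))
  have habs : ∀ n, Summable (fun x => |u n x - p x|) := fun n =>
    (((hus n).add hps).of_nonneg_of_le (fun x => abs_nonneg _)
      (fun x => (abs_sub (u n x) (p x)).trans (by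
        rw [abs_of_nonneg (hu0 n x), abs_of_nonneg (hp0 x)])))
  have hkey : ∀ n, ∑' x, |u n x - p x| = 2 * ∑' x, d n x := by
    intro n
    have hpw : ∀ x, |u n x - p x| = (u n x - p x) + 2 * d n x := by
      intro x
      rcases le_total (p x) (u n x) with h | h
      · rw [abs_of_nonneg (by linarith), hd]
        simp only [max_eq_right (by linarith : p x - u n x ≤ 0)]
        ring
      · rw [abs_of_nonpos (by linarith), hd]
        simp only [max_eq_left (by linarith : (0:ℝ) ≤ p x - u n x)]
        ring
    calc ∑' x, |u n x - p x| = ∑' x, ((u n x - p x) + 2 * d n x) := by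
          exact tsum_congr hpw
      _ = (∑' x, (u n x - p x)) + ∑' x, 2 * d n x := by
          exact Summable.tsum_add ((hus n).sub hps) ((hds n).mul_left 2)
      _ = 2 * ∑' x, d n x := by
          rw [Summable.tsum_sub (hus n) hps, (hu1 n).tsum_eq, hp1.tsum_eq, tsum_mul_left]
          ring
  rw [tendsto_iff_dist_tendsto_zero]
  have hsub : ∀ n, Summable (fun x => u n x * c x - p x * c x) :=
    fun n => (husc n).sub hpsc
  have hbound : ∀ n, dist (∑' x, u n x * c x) (∑' x, p x * c x) ≤ 2 * M * ∑' x, d n x := by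
    intro n
    rw [Real.dist_eq, ← Summable.tsum_sub (husc n) hpsc]
    have h2 : |∑' x, (u n x * c x - p x * c x)| ≤ ∑' x, |u n x * c x - p x * c x| := by
      have := norm_tsum_le_tsum_norm (f := fun x => u n x * c x - p x * c x)
        (by simpa [Real.norm_eq_abs] using (hsub n).abs)
      simpa [Real.norm_eq_abs] using this
    have h3 : ∑' x, |u n x * c x - p x * c x| ≤ ∑' x, |u n x - p x| * M := by
      refine Summable.tsum_le_tsum (fun x => ?_) ((hsub n).abs) ((habs n).mul_right M)
      rw [← sub_mul, abs_mul]
      exact mul_le_mul_of_nonneg_left (hc x) (abs_nonneg _)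
    have h4 : ∑' x, |u n x - p x| * M = 2 * M * ∑' x, d n x := by
      rw [tsum_mul_right, hkey n]; ring
    linarith
  apply squeeze_zero (fun n => dist_nonneg) hbound
  have := hdt.const_mul (2 * M)
  simpa using this

end ScheffeAux

section MeasureAux

variable {S : Type*} [MeasurableSpace S] [Countable S] [MeasurableSingletonClass S]
variable {T : Type*} [MeasurableSpace T]

lemma hasSum_pmf_aux (μ : Measure S) [IsProbabilityMeasure μ] :
    HasSum (fun x => (μ {x}).toReal) 1 := by
  have h1 : ∑' x, μ {x} = 1 := by
    have := Measure.tsum_indicator_apply_singleton μ Set.univ MeasurableSet.univ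
    simpa using this
  have hs : Summable (fun x => (μ {x}).toReal) :=
    ENNReal.summable_toReal (by simp [h1])
  have ht : ∑' x, (μ {x}).toReal = 1 := by
    rw [← ENNReal.tsum_toReal_eq (fun x => measure_ne_top μ _), h1, ENNReal.toReal_one]
  exact ht ▸ hs.hasSum

lemma bind_eq_sum_aux (K : S → Measure T) (hK : Measurable K)
    (μ : Measure S) : μ.bind K = Measure.sum (fun x => μ {x} • K x) := by
  ext s hs
  rw [Measure.bind_apply hs hK.aemeasurable, Measure.sum_apply _ hs, lintegral_countable' (fun x => K x s)]
  simp [Measure.smul_apply, mul_comm]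

omit [Countable S] [MeasurableSingletonClass S] in
lemma isProb_bind_aux (K : S → Measure T) (hK : Measurable K)
    (hKp : ∀ x, IsProbabilityMeasure (K x)) (μ : Measure S) [IsProbabilityMeasure μ] :
    IsProbabilityMeasure (μ.bind K) := by
  constructor
  rw [Measure.bind_apply MeasurableSet.univ hK.aemeasurable]
  simp [measure_univ]

lemma integral_bind_eq_aux {T : Type*} [MeasurableSpace T] [TopologicalSpace T]
    [OpensMeasurableSpace T]
    (K : S → Measure T) (hK : Measurable K) (hKp : ∀ x, IsProbabilityMeasure (K x))
    (μ : Measure S) [IsProbabilityMeasure μ] (f : BoundedContinuousFunction T ℝ) :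
    ∫ y, f y ∂(μ.bind K) = ∑' x, (μ {x}).toReal * ∫ y, f y ∂(K x) := by
  have hbp : IsProbabilityMeasure (μ.bind K) := isProb_bind_aux K hK hKp μ
  have hint : Integrable f (μ.bind K) := f.integrable _
  rw [bind_eq_sum_aux K hK μ] at hint ⊢
  rw [integral_sum_measure hint]
  apply tsum_congr fun x => ?_
  rw [integral_smul_measure, smul_eq_mul]

lemma integral_eq_tsum_aux (μ : Measure S) [IsProbabilityMeasure μ]
    [TopologicalSpace S] [OpensMeasurableSpace S] (g : BoundedContinuousFunction S ℝ) :
    ∫ x, g x ∂μ = ∑' x, (μ {x}).toReal * g x := by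
  rw [integral_countable' (g.integrable μ)]
  simp [smul_eq_mul]
  rfl

end MeasureAux

lemma ext_of_integral_eq_aux {Ω : Type*} [MeasurableSpace Ω] [TopologicalSpace Ω]
    [HasOuterApproxClosed Ω] [BorelSpace Ω] (μ ν : Measure Ω)
    [IsProbabilityMeasure μ] [IsProbabilityMeasure ν]
    (h : ∀ f : BoundedContinuousFunction Ω ℝ, ∫ x, f x ∂μ = ∫ x, f x ∂ν) : μ = ν := by
  apply ext_of_forall_lintegral_eq_of_IsFiniteMeasure
  intro f
  have hfin1 : ∫⁻ x, f x ∂μ ≠ ⊤ := (f.lintegral_lt_top_of_nnreal μ).ne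
  have hfin2 : ∫⁻ x, f x ∂ν ≠ ⊤ := (f.lintegral_lt_top_of_nnreal ν).ne
  rw [← ENNReal.toReal_eq_toReal_iff' hfin1 hfin2,
    f.toReal_lintegral_coe_eq_integral μ, f.toReal_lintegral_coe_eq_integral ν]
  let g : BoundedContinuousFunction Ω ℝ :=
    ⟨⟨fun x => (f x : ℝ), NNReal.continuous_coe.comp f.continuous⟩, by
      obtain ⟨C, hC⟩ := f.map_bounded'
      exact ⟨C, fun x y => by simpa [NNReal.dist_eq, Real.dist_eq] using hC x y⟩⟩
  exact h g

/-- Let `S` be a countable discrete space, `T` a metric space, and `K` a probability kernel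
from `S` to `T` which is injective as a map from probability measures on `S` to probability
measures on `T` (via `Q ↦ Q.bind K`).  If `(Q n)` is a tight sequence of probability
measures on `S` and `(Q n).bind K → Q∞.bind K` weakly, then `Q n → Q∞` weakly. -/
theorem weak_convergence_from_injective_kernel
    {S : Type*} [TopologicalSpace S] [DiscreteTopology S] [Countable S]
    [MeasurableSpace S] [BorelSpace S]
    {T : Type*} [MetricSpace T] [MeasurableSpace T] [BorelSpace T]
    (K : S → Measure T) (hKmeas : Measurable K)
    (hKprob : ∀ x, IsProbabilityMeasure (K x))
    (Q : ℕ → Measure S) (Qlim : Measure S)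
    (hQprob : ∀ n, IsProbabilityMeasure (Q n)) (hQlimprob : IsProbabilityMeasure Qlim)
    -- tightness of the sequence `(Q n)`
    (htight : ∀ ε : ℝ, 0 < ε → ∃ C : Set S, IsCompact C ∧
      ∀ n, Q n Cᶜ ≤ ENNReal.ofReal ε)
    -- injectivity of `K` on probability measures
    (hinj : ∀ μ ν : Measure S, IsProbabilityMeasure μ → IsProbabilityMeasure ν →
      μ.bind K = ν.bind K → μ = ν)
    -- weak convergence of the pushed-forward measures
    (hconv : ∀ f : BoundedContinuousFunction T ℝ,
      Tendsto (fun n => ∫ y, f y ∂((Q n).bind K)) atTop (𝓝 (∫ y, f y ∂(Qlim.bind K)))) :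
    -- weak convergence of the original measures
    ∀ g : BoundedContinuousFunction S ℝ,
      Tendsto (fun n => ∫ x, g x ∂(Q n)) atTop (𝓝 (∫ x, g x ∂Qlim)) := by
  intro g
  -- pmf facts for each `Q m`
  have hQ1 : ∀ m : ℕ, HasSum (fun x => ((Q m) {x}).toReal) 1 := fun m => by
    haveI := hQprob m; exact hasSum_pmf_aux (Q m)
  apply tendsto_of_subseq_tendsto
  intro ns hns
  -- the pmfs of the subsequence
  set u : ℕ → S → ℝ := fun k x => ((Q (ns k)) {x}).toReal with hu
  have hu0 : ∀ k x, 0 ≤ u k x := fun k x => ENNReal.toReal_nonneg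
  have humem : ∀ k, u k ∈ Set.pi Set.univ (fun _ : S => Set.Icc (0:ℝ) 1) := by
    intro k x _
    refine ⟨ENNReal.toReal_nonneg, ?_⟩
    haveI := hQprob (ns k)
    have h1 : ((Q (ns k)) {x}).toReal ≤ (1 : ℝ≥0∞).toReal :=
      ENNReal.toReal_mono ENNReal.one_ne_top prob_le_one
    simpa using h1
  -- extract a pointwise convergent subsequence of pmfs
  have hcpt : IsCompact (Set.pi Set.univ fun _ : S => Set.Icc (0:ℝ) 1) :=
    isCompact_univ_pi fun _ => isCompact_Icc
  obtain ⟨p, hpmem, φ, hφ, hupφ⟩ := hcpt.tendsto_subseq humem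
  rw [tendsto_pi_nhds] at hupφ
  have hpt : ∀ x, Tendsto (fun k => u (φ k) x) atTop (𝓝 (p x)) := fun x => hupφ x
  have hp0 : ∀ x, 0 ≤ p x := fun x => (hpmem x (Set.mem_univ x)).1
  -- `p` sums to 1 (using tightness)
  have hFle : ∀ (F : Finset S) (m : ℕ), ∑ x ∈ F, ((Q m) {x}).toReal ≤ 1 := by
    intro F m
    have h := Summable.sum_le_tsum F (fun x _ => ENNReal.toReal_nonneg) (hQ1 m).summable
    rwa [(hQ1 m).tsum_eq] at h
  have hpF : ∀ F : Finset S, ∑ x ∈ F, p x ≤ 1 := fun F =>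
    le_of_tendsto (tendsto_finset_sum F fun x _ => hpt x)
      (Eventually.of_forall fun k => hFle F _)
  have hpsum : Summable p := summable_of_sum_le hp0 hpF
  have hp1 : HasSum p 1 := by
    have hle : ∑' x, p x ≤ 1 := Summable.tsum_le_of_sum_le hpsum hpF
    have hge : (1:ℝ) ≤ ∑' x, p x := by
      apply le_of_forall_pos_le_add
      intro ε hε
      obtain ⟨C, hCcpt, hCε⟩ := htight ε hε
      have hCfin : C.Finite := hCcpt.finite (IsDiscrete.of_nhdsWithin fun x _ =>
        nhdsWithin_le_nhds.trans (le_of_eq (congrFun (nhds_discrete S) x)))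
      set F := hCfin.toFinset with hF
      have hQC : ∀ m, 1 - ε ≤ ∑ x ∈ F, ((Q m) {x}).toReal := by
        intro m
        haveI := hQprob m
        have hmeasC : MeasurableSet C := hCfin.measurableSet
        have hsum : (Q m) C = ∑ x ∈ F, (Q m) {x} := by
          have hC : C = ⋃ x ∈ F, ({x} : Set S) := by
            simp [hF, Set.biUnion_of_singleton, hCfin.coe_toFinset]
          rw [hC, measure_biUnion_finset]
          · intro a _ b _ hab
            simp [Function.onFun, Set.disjoint_singleton, hab]
          · exact fun b _ => measurableSet_singleton b
        have hcompl : ((Q m) Cᶜ).toReal ≤ ε := by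
          have := hCε m
          have h2 : ((Q m) Cᶜ).toReal ≤ (ENNReal.ofReal ε).toReal :=
            ENNReal.toReal_mono ENNReal.ofReal_ne_top this
          rwa [ENNReal.toReal_ofReal hε.le] at h2
        have hCval : ((Q m) C).toReal = 1 - ((Q m) Cᶜ).toReal := by
          have h3 : (Q m) Cᶜ = 1 - (Q m) C := prob_compl_eq_one_sub hmeasC
          have h4 : (Q m) C + (Q m) Cᶜ = 1 := by
            rw [h3]
            exact add_tsub_cancel_of_le prob_le_one
          have h5 : ((Q m) C).toReal + ((Q m) Cᶜ).toReal = 1 := by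
            rw [← ENNReal.toReal_add (measure_ne_top _ _) (measure_ne_top _ _), h4,
              ENNReal.toReal_one]
          linarith
        have hsum' : ((Q m) C).toReal = ∑ x ∈ F, ((Q m) {x}).toReal := by
          rw [hsum, ENNReal.toReal_sum (fun x _ => measure_ne_top _ _)]
        linarith
      have hpFge : 1 - ε ≤ ∑ x ∈ F, p x :=
        ge_of_tendsto (tendsto_finset_sum F fun x _ => hpt x)
          (Eventually.of_forall fun k => hQC (ns (φ k)))
      have := Summable.sum_le_tsum F (fun x _ => hp0 x) hpsum
      linarith
    have htsum : ∑' x, p x = 1 := le_antisymm hle hge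
    exact htsum ▸ hpsum.hasSum
  -- construct the candidate limit measure
  set μ : Measure S := Measure.sum (fun x => ENNReal.ofReal (p x) • Measure.dirac x) with hμ
  have hμsing : ∀ x, μ {x} = ENNReal.ofReal (p x) := by
    classical
    intro x
    rw [hμ, Measure.sum_apply _ (measurableSet_singleton x)]
    have hterm : ∀ y, (ENNReal.ofReal (p y) • Measure.dirac y) ({x} : Set S)
        = if y = x then ENNReal.ofReal (p y) else 0 := by
      intro y
      rw [Measure.smul_apply, Measure.dirac_apply' _ (measurableSet_singleton x)]
      by_cases h : y = x <;> simp [h]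
    rw [tsum_congr hterm, tsum_eq_single x (fun y hy => by simp [hy])]
    simp
  have hμprob : IsProbabilityMeasure μ := by
    constructor
    rw [hμ, Measure.sum_apply _ MeasurableSet.univ]
    have hterm : ∀ y, (ENNReal.ofReal (p y) • Measure.dirac y) (Set.univ : Set S)
        = ENNReal.ofReal (p y) := by
      intro y
      rw [Measure.smul_apply, Measure.dirac_apply' _ MeasurableSet.univ]
      simp
    rw [tsum_congr hterm, ← ENNReal.ofReal_tsum_of_nonneg hp0 hpsum, hp1.tsum_eq,
      ENNReal.ofReal_one]
  have hμpmf : ∀ x, (μ {x}).toReal = p x := fun x => by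
    rw [hμsing x, ENNReal.toReal_ofReal (hp0 x)]
  -- the pushed-forward measures agree
  haveI hμbindprob : IsProbabilityMeasure (μ.bind K) := isProb_bind_aux K hKmeas hKprob μ
  haveI : IsProbabilityMeasure (Qlim.bind K) := isProb_bind_aux K hKmeas hKprob Qlim
  have hbindeq : μ.bind K = Qlim.bind K := by
    apply ext_of_integral_eq_aux
    intro f
    have hcbound : ∀ x, |∫ y, f y ∂(K x)| ≤ ‖f‖ := by
      intro x
      haveI := hKprob x
      have h := norm_integral_le_of_norm_le_const (μ := K x) (C := ‖f‖)
        (Eventually.of_forall fun y => f.norm_coe_le_norm y)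
      simpa [measure_univ, Real.norm_eq_abs] using h
    have h1 : Tendsto (fun k => ∫ y, f y ∂((Q (ns (φ k))).bind K)) atTop
        (𝓝 (∫ y, f y ∂(Qlim.bind K))) := (hconv f).comp (hns.comp hφ.tendsto_atTop)
    have h2 : Tendsto (fun k => ∫ y, f y ∂((Q (ns (φ k))).bind K)) atTop
        (𝓝 (∑' x, p x * ∫ y, f y ∂(K x))) := by
      have hsch := scheffe_tendsto_tsum (u := fun k => u (φ k)) (p := p)
        (fun k x => hu0 (φ k) x) hp0 (fun k => hQ1 (ns (φ k))) hp1 hpt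
        (fun x => ∫ y, f y ∂(K x)) ‖f‖ hcbound
      have heq : (fun k => ∫ y, f y ∂((Q (ns (φ k))).bind K))
          = fun k => ∑' x, u (φ k) x * ∫ y, f y ∂(K x) := by
        funext k
        haveI := hQprob (ns (φ k))
        exact integral_bind_eq_aux K hKmeas hKprob _ f
      rw [heq]
      exact hsch
    have h3 : ∑' x, p x * ∫ y, f y ∂(K x) = ∫ y, f y ∂(Qlim.bind K) :=
      tendsto_nhds_unique h2 h1
    haveI := hμprob
    rw [integral_bind_eq_aux K hKmeas hKprob μ f]
    simp_rw [hμpmf]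
    rw [h3]
  -- conclude `μ = Qlim` and finish
  have hμQ : μ = Qlim := hinj μ Qlim hμprob hQlimprob hbindeq
  have hppmf : ∀ x, p x = (Qlim {x}).toReal := fun x => by
    rw [← hμpmf x, hμQ]
  refine ⟨φ, ?_⟩
  have hgbound : ∀ x, |g x| ≤ ‖g‖ := fun x => by
    simpa [Real.norm_eq_abs] using g.norm_coe_le_norm x
  have hsch := scheffe_tendsto_tsum (u := fun k => u (φ k)) (p := p)
    (fun k x => hu0 (φ k) x) hp0 (fun k => hQ1 (ns (φ k))) hp1 hpt
    (fun x => g x) ‖g‖ hgbound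
  have heq : (fun k => ∫ x, g x ∂(Q (ns (φ k)))) = fun k => ∑' x, u (φ k) x * g x := by
    funext k
    haveI := hQprob (ns (φ k))
    exact integral_eq_tsum_aux (Q (ns (φ k))) g
  rw [heq]
  have hlim : ∑' x, p x * g x = ∫ x, g x ∂Qlim := by
    rw [integral_eq_tsum_aux Qlim g]
    exact tsum_congr fun x => by rw [hppmf x]
  rw [← hlim]
  exact hsch
end

section
/- Let $\mathcal{W} = (I, S, W)$ be a graphex and $c > 0$, and define the $c$-dilation $\mathcal{W}^c = (c^2 I,\ x \mapsto c S(x/c),\ (x,y) \mapsto W(x/c, y/c))$. If $\Gamma$ is a graphex process generated by $\mathcal{W}$, then the $\frac{1}{c}$-dilation of $\Gamma$ (the pushforward of $\Gamma$ under $(x,y) \mapsto (x/c, y/c)$) is a graphex process generated by $\mathcal{W}^c$. In particular, $\mathrm{uKEG}(\mathcal{W}, s) = \mathrm{uKEG}(\mathcal{W}^c, s/c)$ for all $s \ge 0$. -/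
open MeasureTheory ProbabilityTheory

/-- A point process `N` (a random measure) on `S` is a Poisson point process with intensity
measure `μ` if the counts on finite-intensity measurable sets are Poisson distributed with
mean `μ A`, and the counts on pairwise disjoint sets are independent. -/
def IsPoissonPP {Ω : Type*} [MeasurableSpace Ω] {S : Type*} [MeasurableSpace S]
    (P : Measure Ω) (N : Ω → Measure S) (μ : Measure S) : Prop :=
  (∀ A : Set S, MeasurableSet A → μ A < ⊤ → ∀ n : ℕ,
      (P {ω | N ω A = n}).toReal
        = Real.exp (-(μ A).toReal) * (μ A).toReal ^ n / n.factorial) ∧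
  (∀ (m : ℕ) (A : Fin m → Set S), (∀ i, MeasurableSet (A i)) →
      Pairwise (Function.onFun Disjoint A) →
      iIndepFun (m := fun _ => inferInstance) (fun i ω => N ω (A i)) P)

/-- Lebesgue measure on the nonnegative quadrant of `ℝ²`. -/
noncomputable def quadrant2 : Measure (ℝ × ℝ) :=
  volume.restrict (Set.Ici 0 ×ˢ Set.Ici 0)

/-- Lebesgue measure on the nonnegative octant of `ℝ³`. -/
noncomputable def octant3 : Measure (ℝ × ℝ × ℝ) :=
  volume.restrict (Set.Ici 0 ×ˢ Set.Ici 0 ×ˢ Set.Ici 0)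

/-- The types of the latent variables of a graphex process: index `0` is the main point
process `(θ i, ϑ i)`, index `1` the isolated-edge process `(ρ k, ρ' k, η k)`, index `2`
the edge variables `ζ`, and index `n + 3` the `n`-th star process `(σ n k, χ n k)`. -/
def latentType : ℕ → Type
  | 0 => ℕ → ℝ × ℝ
  | 1 => ℕ → ℝ × ℝ × ℝ
  | 2 => Sym2 ℕ → ℝ
  | _ + 3 => ℕ → ℝ × ℝ

/-- The product measurable structure on each latent component. -/
def latentMS : ∀ n, MeasurableSpace (latentType n)
  | 0 => inferInstanceAs (MeasurableSpace (ℕ → ℝ × ℝ))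
  | 1 => inferInstanceAs (MeasurableSpace (ℕ → ℝ × ℝ × ℝ))
  | 2 => inferInstanceAs (MeasurableSpace (Sym2 ℕ → ℝ))
  | _ + 3 => inferInstanceAs (MeasurableSpace (ℕ → ℝ × ℝ))

/-- The family of all latent variables of a graphex process, as one indexed family. -/
def latentFam {Ω : Type} (θϑ : ℕ → Ω → ℝ × ℝ) (star : ℕ → ℕ → Ω → ℝ × ℝ)
    (iso : ℕ → Ω → ℝ × ℝ × ℝ) (ζ : Sym2 ℕ → Ω → ℝ) : ∀ n, Ω → latentType n
  | 0 => fun ω i => θϑ i ω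
  | 1 => fun ω k => iso k ω
  | 2 => fun ω p => ζ p ω
  | n + 3 => fun ω k => star n k ω

/-- `Γ` is a graphex process generated by the graphex `(I, S, W)`: there are latent
unit-rate Poisson processes (the main process on `ℝ₊²`, one star process on `ℝ₊²` for each
point, and an isolated-edge process on `ℝ₊³`) and i.i.d. uniform edge variables, all
jointly independent, from which `Γ` is built via the Kallenberg representation. -/
def IsGraphexProcess {Ω : Type} [MeasurableSpace Ω] (P : Measure Ω)
    (I : ℝ) (S : ℝ → ℝ) (W : ℝ → ℝ → ℝ) (Γ : Ω → Set (Sym2 ℝ)) : Prop :=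
  ∃ (θϑ : ℕ → Ω → ℝ × ℝ) (star : ℕ → ℕ → Ω → ℝ × ℝ)
    (iso : ℕ → Ω → ℝ × ℝ × ℝ) (ζ : Sym2 ℕ → Ω → ℝ),
    IsPoissonPP P (fun ω => Measure.sum fun i => Measure.dirac (θϑ i ω)) quadrant2 ∧
    (∀ j, IsPoissonPP P
      (fun ω => Measure.sum fun k => Measure.dirac (star j k ω)) quadrant2) ∧
    IsPoissonPP P (fun ω => Measure.sum fun k => Measure.dirac (iso k ω)) octant3 ∧
    (∀ p, Measure.map (ζ p) P = volume.restrict (Set.Icc 0 1)) ∧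
    iIndepFun (m := latentMS) (latentFam θϑ star iso ζ) P ∧
    ∀ ω, Γ ω =
      ({e | ∃ i j : ℕ, i ≠ j ∧ e = Sym2.mk (θϑ i ω).1 (θϑ j ω).1 ∧
          ζ (Sym2.mk i j) ω ≤ W (θϑ i ω).2 (θϑ j ω).2}
        ∪ {e | ∃ j k : ℕ, e = Sym2.mk (θϑ j ω).1 (star j k ω).1 ∧
            (star j k ω).2 ≤ S (θϑ j ω).2}
        ∪ {e | ∃ k : ℕ, e = Sym2.mk (iso k ω).1 (iso k ω).2.1 ∧
            (iso k ω).2.2 ≤ I})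

instance : MeasurableSpace (Set (Sym2 ℝ)) := ⊤

/-- Unlabeled graphs: labeled graphs (edge sets over real labels) up to relabeling. -/
abbrev UGraph : Type := Quot fun E E' : Set (Sym2 ℝ) => ∃ g : ℝ ≃ ℝ, (Sym2.map g) '' E = E'

/-- The restriction of a labeled graph to vertices with labels at most `t`. -/
def restrictGraph (E : Set (Sym2 ℝ)) (t : ℝ) : Set (Sym2 ℝ) := {e ∈ E | ∀ x ∈ e, x ≤ t}


section DilationAux

open Set

private lemma pairmul_smul_map (a b : ℝ) (ha : 0 < a) (hb : 0 < b) :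
    ENNReal.ofReal (a * b) • Measure.map
      (fun p : ℝ × ℝ => (a * p.1, b * p.2)) (volume : Measure (ℝ × ℝ)) = volume := by
  have hT : Measurable fun p : ℝ × ℝ => (a * p.1, b * p.2) := by fun_prop
  rw [MeasureTheory.Measure.volume_eq_prod]
  refine (Measure.prod_eq fun s t hs ht => ?_).symm
  rw [Measure.smul_apply, Measure.map_apply hT (hs.prod ht)]
  have hpre : (fun p : ℝ × ℝ => (a * p.1, b * p.2)) ⁻¹' (s ×ˢ t)
      = ((a * ·) ⁻¹' s) ×ˢ ((b * ·) ⁻¹' t) := rfl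
  rw [hpre, Measure.prod_prod,
    Real.volume_preimage_mul_left ha.ne' s, Real.volume_preimage_mul_left hb.ne' t,
    abs_of_pos (inv_pos.2 ha), abs_of_pos (inv_pos.2 hb), smul_eq_mul,
    ENNReal.ofReal_mul ha.le]
  have h1 : ENNReal.ofReal a * ENNReal.ofReal a⁻¹ = 1 := by
    rw [← ENNReal.ofReal_mul ha.le, mul_inv_cancel₀ ha.ne', ENNReal.ofReal_one]
  have h2 : ENNReal.ofReal b * ENNReal.ofReal b⁻¹ = 1 := by
    rw [← ENNReal.ofReal_mul hb.le, mul_inv_cancel₀ hb.ne', ENNReal.ofReal_one]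
  calc ENNReal.ofReal a * ENNReal.ofReal b
        * (ENNReal.ofReal a⁻¹ * volume s * (ENNReal.ofReal b⁻¹ * volume t))
      = (ENNReal.ofReal a * ENNReal.ofReal a⁻¹) * (ENNReal.ofReal b * ENNReal.ofReal b⁻¹)
          * (volume s * volume t) := by ring
    _ = volume s * volume t := by rw [h1, h2, one_mul, one_mul]

private lemma map_pairmul (a b : ℝ) (ha : 0 < a) (hb : 0 < b) (hab : a * b = 1) :
    Measure.map (fun p : ℝ × ℝ => (a * p.1, b * p.2)) (volume : Measure (ℝ × ℝ)) = volume := by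
  have := pairmul_smul_map a b ha hb
  rwa [hab, ENNReal.ofReal_one, one_smul] at this

private lemma vol_preimage_pairmul (a b : ℝ) (ha : 0 < a) (hb : 0 < b) {t : Set (ℝ × ℝ)}
    (ht : MeasurableSet t) :
    volume ((fun p : ℝ × ℝ => (a * p.1, b * p.2)) ⁻¹' t)
      = ENNReal.ofReal (a * b)⁻¹ * volume t := by
  have hT : Measurable fun p : ℝ × ℝ => (a * p.1, b * p.2) := by fun_prop
  have h := pairmul_smul_map a b ha hb
  have happ := congrArg (fun μ : Measure (ℝ × ℝ) => μ t) h
  simp only [Measure.smul_apply, smul_eq_mul, Measure.map_apply hT ht] at happ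
  have hne : ENNReal.ofReal (a * b) ≠ 0 := (ENNReal.ofReal_pos.2 (by positivity)).ne'
  rw [← happ, ← mul_assoc, ENNReal.ofReal_inv_of_pos (by positivity),
    ENNReal.inv_mul_cancel hne ENNReal.ofReal_ne_top, one_mul]

private lemma map_triplemul (a b d : ℝ) (ha : 0 < a) (hb : 0 < b) (hd : 0 < d)
    (habd : a * (b * d) = 1) :
    Measure.map (fun p : ℝ × ℝ × ℝ => (a * p.1, b * p.2.1, d * p.2.2))
      (volume : Measure (ℝ × ℝ × ℝ)) = volume := by
  have hT : Measurable fun p : ℝ × ℝ × ℝ => (a * p.1, b * p.2.1, d * p.2.2) := by fun_prop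
  rw [MeasureTheory.Measure.volume_eq_prod]
  refine (Measure.prod_eq fun s t hs ht => ?_).symm
  rw [Measure.map_apply hT (hs.prod ht)]
  have hpre : (fun p : ℝ × ℝ × ℝ => (a * p.1, b * p.2.1, d * p.2.2)) ⁻¹' (s ×ˢ t)
      = ((a * ·) ⁻¹' s) ×ˢ ((fun q : ℝ × ℝ => (b * q.1, d * q.2)) ⁻¹' t) := rfl
  rw [hpre, Measure.prod_prod,
    Real.volume_preimage_mul_left ha.ne' s, vol_preimage_pairmul b d hb hd ht,
    abs_of_pos (inv_pos.2 ha)]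
  have hbd : (b * d)⁻¹ = a := by
    field_simp
    nlinarith [habd]
  have h1 : ENNReal.ofReal a⁻¹ * ENNReal.ofReal a = 1 := by
    rw [← ENNReal.ofReal_mul (by positivity), inv_mul_cancel₀ ha.ne', ENNReal.ofReal_one]
  calc ENNReal.ofReal a⁻¹ * volume s * (ENNReal.ofReal (b * d)⁻¹ * volume t)
      = ENNReal.ofReal a⁻¹ * ENNReal.ofReal (b * d)⁻¹ * (volume s * volume t) := by ring
    _ = volume s * volume t := by rw [hbd, h1, one_mul]

private lemma mp_quadrant2 {c : ℝ} (hc : 0 < c) :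
    MeasurePreserving (fun p : ℝ × ℝ => (c⁻¹ * p.1, c * p.2)) quadrant2 quadrant2 := by
  have hT : Measurable fun p : ℝ × ℝ => (c⁻¹ * p.1, c * p.2) := by fun_prop
  refine ⟨hT, ?_⟩
  have hQ : MeasurableSet (Ici (0:ℝ) ×ˢ Ici (0:ℝ)) := measurableSet_Ici.prod measurableSet_Ici
  have hpre : (fun p : ℝ × ℝ => (c⁻¹ * p.1, c * p.2)) ⁻¹' (Ici 0 ×ˢ Ici 0)
      = Ici (0:ℝ) ×ˢ Ici (0:ℝ) := by
    ext p
    simp only [Set.mem_preimage, Set.mem_prod, Set.mem_Ici]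
    rw [mul_nonneg_iff_of_pos_left (inv_pos.2 hc), mul_nonneg_iff_of_pos_left hc]
  calc Measure.map (fun p : ℝ × ℝ => (c⁻¹ * p.1, c * p.2)) quadrant2
      = Measure.map (fun p : ℝ × ℝ => (c⁻¹ * p.1, c * p.2))
          (volume.restrict ((fun p : ℝ × ℝ => (c⁻¹ * p.1, c * p.2)) ⁻¹' (Ici 0 ×ˢ Ici 0))) := by
        rw [quadrant2, hpre]
    _ = (Measure.map (fun p : ℝ × ℝ => (c⁻¹ * p.1, c * p.2)) volume).restrict
          (Ici 0 ×ˢ Ici 0) := (Measure.restrict_map hT hQ).symm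
    _ = quadrant2 := by
        rw [map_pairmul c⁻¹ c (inv_pos.2 hc) hc (inv_mul_cancel₀ hc.ne'), quadrant2]

private lemma mp_octant3 {c : ℝ} (hc : 0 < c) :
    MeasurePreserving (fun p : ℝ × ℝ × ℝ => (c⁻¹ * p.1, c⁻¹ * p.2.1, c ^ 2 * p.2.2))
      octant3 octant3 := by
  have hT : Measurable fun p : ℝ × ℝ × ℝ => (c⁻¹ * p.1, c⁻¹ * p.2.1, c ^ 2 * p.2.2) := by
    fun_prop
  refine ⟨hT, ?_⟩
  have hQ : MeasurableSet (Ici (0:ℝ) ×ˢ Ici (0:ℝ) ×ˢ Ici (0:ℝ)) :=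
    measurableSet_Ici.prod (measurableSet_Ici.prod measurableSet_Ici)
  have hpre : (fun p : ℝ × ℝ × ℝ => (c⁻¹ * p.1, c⁻¹ * p.2.1, c ^ 2 * p.2.2)) ⁻¹'
      (Ici 0 ×ˢ Ici 0 ×ˢ Ici 0) = Ici (0:ℝ) ×ˢ Ici (0:ℝ) ×ˢ Ici (0:ℝ) := by
    ext p
    simp only [Set.mem_preimage, Set.mem_prod, Set.mem_Ici]
    rw [mul_nonneg_iff_of_pos_left (inv_pos.2 hc), mul_nonneg_iff_of_pos_left (inv_pos.2 hc),
      mul_nonneg_iff_of_pos_left (by positivity : (0:ℝ) < c ^ 2)]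
  calc Measure.map (fun p : ℝ × ℝ × ℝ => (c⁻¹ * p.1, c⁻¹ * p.2.1, c ^ 2 * p.2.2)) octant3
      = Measure.map (fun p : ℝ × ℝ × ℝ => (c⁻¹ * p.1, c⁻¹ * p.2.1, c ^ 2 * p.2.2))
          (volume.restrict ((fun p : ℝ × ℝ × ℝ => (c⁻¹ * p.1, c⁻¹ * p.2.1, c ^ 2 * p.2.2)) ⁻¹'
            (Ici 0 ×ˢ Ici 0 ×ˢ Ici 0))) := by rw [octant3, hpre]
    _ = (Measure.map (fun p : ℝ × ℝ × ℝ => (c⁻¹ * p.1, c⁻¹ * p.2.1, c ^ 2 * p.2.2))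
          volume).restrict (Ici 0 ×ˢ Ici 0 ×ˢ Ici 0) := (Measure.restrict_map hT hQ).symm
    _ = octant3 := by
        rw [map_triplemul c⁻¹ c⁻¹ (c ^ 2) (inv_pos.2 hc) (inv_pos.2 hc) (by positivity)
          (by field_simp), octant3]

private lemma IsPoissonPP.comp_map {Ω : Type*} [MeasurableSpace Ω] {S : Type*}
    [MeasurableSpace S] [MeasurableSingletonClass S] {P : Measure Ω} {ι : Type*} [Countable ι]
    {f : ι → Ω → S} {μ : Measure S} {T : S → S} (hT : MeasurePreserving T μ μ)
    (h : IsPoissonPP P (fun ω => Measure.sum fun i => Measure.dirac (f i ω)) μ) :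
    IsPoissonPP P (fun ω => Measure.sum fun i => Measure.dirac (T (f i ω))) μ := by
  have key : ∀ (A : Set S), MeasurableSet A → ∀ ω,
      (Measure.sum fun i => Measure.dirac (T (f i ω))) A
        = (Measure.sum fun i => Measure.dirac (f i ω)) (T ⁻¹' A) := by
    intro A hA ω
    rw [Measure.sum_apply _ hA, Measure.sum_apply _ (hT.measurable hA)]
    congr 1
    ext i
    rw [Measure.dirac_apply, Measure.dirac_apply]
    rfl
  constructor
  · intro A hA hμ n
    have hA' := hT.measurable hA
    have hμ' : μ (T ⁻¹' A) = μ A := hT.measure_preimage hA.nullMeasurableSet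
    have e1 : {ω | (Measure.sum fun i => Measure.dirac (T (f i ω))) A = n}
        = {ω | (Measure.sum fun i => Measure.dirac (f i ω)) (T ⁻¹' A) = n} := by
      ext ω; rw [Set.mem_setOf_eq, Set.mem_setOf_eq, key A hA ω]
    rw [e1, ← hμ']
    exact h.1 _ hA' (by rw [hμ']; exact hμ) n
  · intro m A hA hd
    have e2 : (fun (i : Fin m) ω => (Measure.sum fun j => Measure.dirac (T (f j ω))) (A i))
        = fun (i : Fin m) ω =>
            (Measure.sum fun j => Measure.dirac (f j ω)) (T ⁻¹' (A i)) := by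
      funext i ω; exact key _ (hA i) ω
    rw [e2]
    exact h.2 m _ (fun i => hT.measurable (hA i)) (fun i j hij => (hd hij).preimage T)

end DilationAux

/-- Dilation of graphex processes: if `Γ` is a graphex process generated by the graphex
`(I, S, W)` and `c > 0`, then the `1/c`-dilation of `Γ` (pushforward of the labels under
`x ↦ x / c`) is a graphex process generated by the `c`-dilation
`(c² I, x ↦ c • S(x/c), (x,y) ↦ W(x/c, y/c))`.  In particular the unlabeled graph of the
dilated process at size `s / c` has the same law as that of `Γ` at size `s`. -/
theorem graphex_process_dilation
    {Ω : Type} [MeasurableSpace Ω] (P : Measure Ω) [IsProbabilityMeasure P]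
    (I : ℝ) (S : ℝ → ℝ) (W : ℝ → ℝ → ℝ)
    (hI : 0 ≤ I) (hS0 : ∀ x, 0 ≤ S x)
    (hSint : ∫⁻ x in Set.Ici (0:ℝ), ENNReal.ofReal (S x) < ⊤)
    (hWrange : ∀ x y, W x y ∈ Set.Icc (0:ℝ) 1) (hWsym : ∀ x y, W x y = W y x)
    (hWmeas : Measurable (Function.uncurry W))
    -- graphex integrability conditions on `W`, with `μW x = ∫ W (x, ·)`
    (hW1 : volume {x ∈ Set.Ici (0:ℝ) |
      (∫⁻ y in Set.Ici (0:ℝ), ENNReal.ofReal (W x y)) = ⊤} = 0)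
    (hW2 : volume {x ∈ Set.Ici (0:ℝ) |
      1 < ∫⁻ y in Set.Ici (0:ℝ), ENNReal.ofReal (W x y)} < ⊤)
    (hW3 : ∫⁻ x in Set.Ici (0:ℝ), ∫⁻ y in Set.Ici (0:ℝ),
      (ENNReal.ofReal (W x y)
        * Set.indicator {x | (∫⁻ z in Set.Ici (0:ℝ), ENNReal.ofReal (W x z)) ≤ 1} 1 x
        * Set.indicator {y | (∫⁻ z in Set.Ici (0:ℝ), ENNReal.ofReal (W y z)) ≤ 1} 1 y) < ⊤)
    (hW4 : ∫⁻ x in Set.Ici (0:ℝ), ENNReal.ofReal (W x x) < ⊤)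
    (Γ : Ω → Set (Sym2 ℝ)) (hΓ : IsGraphexProcess P I S W Γ)
    (c : ℝ) (hc : 0 < c) :
    IsGraphexProcess P (c ^ 2 * I) (fun x => c * S (x / c)) (fun x y => W (x / c) (y / c))
        (fun ω => (Sym2.map fun x => x / c) '' Γ ω) ∧
      ∀ s : ℝ, 0 ≤ s → ∀ A : Set UGraph,
        P ((fun ω => Quot.mk _ (restrictGraph
            ((Sym2.map fun x => x / c) '' Γ ω) (s / c))) ⁻¹' A)
          = P ((fun ω => Quot.mk _ (restrictGraph (Γ ω) s)) ⁻¹' A) := by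
  obtain ⟨θϑ, star, iso, ζ, hpp1, hpp2, hpp3, hζ, hind, hrep⟩ := hΓ
  have hc' : c ≠ 0 := hc.ne'
  have hc2 : (0:ℝ) < c ^ 2 := by positivity
  constructor
  · refine ⟨fun i ω => (c⁻¹ * (θϑ i ω).1, c * (θϑ i ω).2),
      fun j k ω => (c⁻¹ * (star j k ω).1, c * (star j k ω).2),
      fun k ω => (c⁻¹ * (iso k ω).1, c⁻¹ * (iso k ω).2.1, c ^ 2 * (iso k ω).2.2),
      ζ, ?_, ?_, ?_, hζ, ?_, ?_⟩
    · exact IsPoissonPP.comp_map (f := θϑ)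
        (T := fun p : ℝ × ℝ => (c⁻¹ * p.1, c * p.2)) (mp_quadrant2 hc) hpp1
    · exact fun j => IsPoissonPP.comp_map (f := star j)
        (T := fun p : ℝ × ℝ => (c⁻¹ * p.1, c * p.2)) (mp_quadrant2 hc) (hpp2 j)
    · exact IsPoissonPP.comp_map (f := iso)
        (T := fun p : ℝ × ℝ × ℝ => (c⁻¹ * p.1, c⁻¹ * p.2.1, c ^ 2 * p.2.2))
        (mp_octant3 hc) hpp3
    · -- independence
      let G : ∀ n, latentType n → latentType n := fun n =>
        match n with
        | 0 => fun h i => ((c⁻¹ * (h i).1, c * (h i).2) : ℝ × ℝ)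
        | 1 => fun h k => ((c⁻¹ * (h k).1, c⁻¹ * (h k).2.1, c ^ 2 * (h k).2.2) : ℝ × ℝ × ℝ)
        | 2 => id
        | _ + 3 => fun h i => ((c⁻¹ * (h i).1, c * (h i).2) : ℝ × ℝ)
      have hT2 : Measurable fun p : ℝ × ℝ => (c⁻¹ * p.1, c * p.2) := by fun_prop
      have hT3 : Measurable fun p : ℝ × ℝ × ℝ => (c⁻¹ * p.1, c⁻¹ * p.2.1, c ^ 2 * p.2.2) := by
        fun_prop
      have hG : ∀ n, @Measurable _ _ (latentMS n) (latentMS n) (G n) := by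
        intro n
        match n with
        | 0 =>
          show Measurable fun (h : ℕ → ℝ × ℝ) i => ((c⁻¹ * (h i).1, c * (h i).2) : ℝ × ℝ)
          exact measurable_pi_lambda _ fun i => hT2.comp (measurable_pi_apply i)
        | 1 =>
          show Measurable fun (h : ℕ → ℝ × ℝ × ℝ) k =>
            ((c⁻¹ * (h k).1, c⁻¹ * (h k).2.1, c ^ 2 * (h k).2.2) : ℝ × ℝ × ℝ)
          exact measurable_pi_lambda _ fun i => hT3.comp (measurable_pi_apply i)
        | 2 =>
          show Measurable (id : (Sym2 ℕ → ℝ) → (Sym2 ℕ → ℝ))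
          exact measurable_id
        | (m + 3) =>
          show Measurable fun (h : ℕ → ℝ × ℝ) i => ((c⁻¹ * (h i).1, c * (h i).2) : ℝ × ℝ)
          exact measurable_pi_lambda _ fun i => hT2.comp (measurable_pi_apply i)
      have hcomp := hind.comp G hG
      have heq : (fun n => G n ∘ latentFam θϑ star iso ζ n)
          = latentFam (fun i ω => (c⁻¹ * (θϑ i ω).1, c * (θϑ i ω).2))
              (fun j k ω => (c⁻¹ * (star j k ω).1, c * (star j k ω).2))
              (fun k ω => (c⁻¹ * (iso k ω).1, c⁻¹ * (iso k ω).2.1, c ^ 2 * (iso k ω).2.2)) ζ := by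
        funext n
        rcases n with (_|(_|(_|m))) <;> rfl
      rw [heq] at hcomp
      exact hcomp
    · -- the graph representation
      intro ω
      dsimp only
      simp only [div_eq_inv_mul, inv_mul_cancel_left₀ hc', mul_le_mul_iff_of_pos_left hc,
        mul_le_mul_iff_of_pos_left hc2]
      rw [hrep ω, Set.image_union, Set.image_union]
      refine congrArg₂ (· ∪ ·) (congrArg₂ (· ∪ ·) ?_ ?_) ?_
      · ext e
        constructor
        · rintro ⟨e₀, ⟨i, j, hij, rfl, hW⟩, rfl⟩
          exact ⟨i, j, hij, by simp [Sym2.map_pair_eq], hW⟩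
        · rintro ⟨i, j, hij, rfl, hW⟩
          exact ⟨Sym2.mk (θϑ i ω).1 (θϑ j ω).1, ⟨i, j, hij, rfl, hW⟩,
            by simp [Sym2.map_pair_eq]⟩
      · ext e
        constructor
        · rintro ⟨e₀, ⟨j, k, rfl, hS⟩, rfl⟩
          exact ⟨j, k, by simp [Sym2.map_pair_eq], hS⟩
        · rintro ⟨j, k, rfl, hS⟩
          exact ⟨Sym2.mk (θϑ j ω).1 (star j k ω).1, ⟨j, k, rfl, hS⟩,
            by simp [Sym2.map_pair_eq]⟩
      · ext e
        constructor
        · rintro ⟨e₀, ⟨k, rfl, hI'⟩, rfl⟩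
          exact ⟨k, by simp [Sym2.map_pair_eq], hI'⟩
        · rintro ⟨k, rfl, hI'⟩
          exact ⟨Sym2.mk (iso k ω).1 (iso k ω).2.1, ⟨k, rfl, hI'⟩,
            by simp [Sym2.map_pair_eq]⟩
  · -- equality of the unlabeled laws
    intro s hs A
    have hfun : (fun ω => Quot.mk (fun E E' : Set (Sym2 ℝ) => ∃ g : ℝ ≃ ℝ,
          (Sym2.map g) '' E = E')
          (restrictGraph ((Sym2.map fun x => x / c) '' Γ ω) (s / c)))
        = fun ω => Quot.mk (fun E E' : Set (Sym2 ℝ) => ∃ g : ℝ ≃ ℝ,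
          (Sym2.map g) '' E = E') (restrictGraph (Γ ω) s) := by
      funext ω
      have himg : (Sym2.map fun x => x / c) '' restrictGraph (Γ ω) s
          = restrictGraph ((Sym2.map fun x => x / c) '' Γ ω) (s / c) := by
        ext e
        constructor
        · rintro ⟨e₀, ⟨he₀, hb⟩, rfl⟩
          refine ⟨⟨e₀, he₀, rfl⟩, ?_⟩
          intro x hx
          obtain ⟨a, ha, rfl⟩ := Sym2.mem_map.1 hx
          exact (div_le_div_iff_of_pos_right hc).2 (hb a ha)
        · rintro ⟨⟨e₀, he₀, rfl⟩, hb⟩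
          refine ⟨e₀, ⟨he₀, fun x hx => ?_⟩, rfl⟩
          exact (div_le_div_iff_of_pos_right hc).1 (hb (x / c) (Sym2.mem_map.2 ⟨x, hx, rfl⟩))
      rw [← himg]
      exact (Quot.sound ⟨⟨fun x => x / c, fun x => x * c,
        fun x => div_mul_cancel₀ x hc.ne', fun x => mul_div_cancel_right₀ x hc.ne'⟩,
        rfl⟩).symm
    exact congrArg (fun F => P (F ⁻¹' A)) hfun
end
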